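/- Let ξ₁,…,ξ_D be independent real-valued random variables and η a counting random variable independent of them with P(η ≤ D) = 1. If for every n in the support of η the distribution function of Sₙ = ξ₁+⋯+ξₙ has a consistently varying tail, then the distribution function of the randomly stopped sum S_η has a consistently varying tail. -/

import Mathlib

open Filter MeasureTheory Topology

/-- The tail function of a real random variable: `x ↦ P(X > x)`. -/
noncomputable def tailDist {Ω : Type*} [MeasurableSpace Ω] (μ : Measure Ω)
    (X : Ω → ℝ) : ℝ → ℝ :=
  fun x => (μ {ω | x < X ω}).toReal

/-- A tail function `T` is consistently varying:
`lim_{y↑1} limsup_{x→∞} T(xy)/T(x) = 1`. -/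
def ConsistentlyVarying (T : ℝ → ℝ) : Prop :=
  Tendsto (fun y : ℝ => Filter.limsup (fun x => T (x * y) / T x) atTop)
    (𝓝[<] (1:ℝ)) (𝓝 1)

/-- If `η` is a counting random variable, bounded by `D`, independent of the
independent r.v.s `ξ₁, ξ₂, …`, and for every `n ≥ 1` in the support of `η` the
distribution of `Sₙ = ξ₁+⋯+ξₙ` has a consistently varying (positive) tail, then
the distribution of the randomly stopped sum `S_η` has a consistently varying
tail. -/
theorem randomly_stopped_sum_consistently_varying_of_partial_sums
    {Ω : Type*} [MeasurableSpace Ω] (μ : Measure Ω) [IsProbabilityMeasure μ]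
    (D : ℕ) (ξ : ℕ → Ω → ℝ) (η : Ω → ℕ)
    (hmeas : ∀ k, Measurable (ξ k)) (hηmeas : Measurable η)
    (hindep : ProbabilityTheory.iIndepFun ξ μ)
    (hindepη : ProbabilityTheory.IndepFun η (fun ω => fun k => ξ k ω) μ)
    (hηD : ∀ᵐ ω ∂μ, η ω ≤ D)
    (hηnondeg : μ {ω | η ω = 0} < 1)
    (hpos : ∀ n : ℕ, 1 ≤ n → 0 < μ {ω | η ω = n} →
      ∀ x, 0 < tailDist μ (fun ω => ∑ k ∈ Finset.Icc 1 n, ξ k ω) x)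
    (hCV : ∀ n : ℕ, 1 ≤ n → 0 < μ {ω | η ω = n} →
      ConsistentlyVarying (tailDist μ (fun ω => ∑ k ∈ Finset.Icc 1 n, ξ k ω))) :
    ConsistentlyVarying (tailDist μ (fun ω => ∑ k ∈ Finset.Icc 1 (η ω), ξ k ω)) := by
  classical
  set S0 : ℕ → Ω → ℝ := fun n ω => ∑ k ∈ Finset.Icc 1 n, ξ k ω with hS0def
  have hSmeas : ∀ n, Measurable (S0 n) := fun n =>
    Finset.measurable_sum _ (fun k _ => hmeas k)
  set p : ℕ → ENNReal := fun n => μ {ω | η ω = n} with hpdef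
  have hpne : ∀ n, p n ≠ ⊤ := fun n => measure_ne_top μ _
  -- beyond D, η = n is null
  have hnull : ∀ n, D < n → p n = 0 := by
    intro n hn
    have h0 : μ {ω | ¬ η ω ≤ D} = 0 := by
      simpa [ae_iff] using hηD
    refine measure_mono_null (fun ω hω => ?_) h0
    simp only [Set.mem_setOf_eq] at hω ⊢
    omega
  have hdisjη : Pairwise (Function.onFun Disjoint fun n => {ω | η ω = n}) := by
    intro m n hmn
    simp only [Function.onFun, Set.disjoint_left]
    rintro ω h1 h2
    exact hmn (h1.symm.trans h2)
  -- decomposition of the randomly stopped tail measure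
  have hdecomp : ∀ x, μ {ω | x < ∑ k ∈ Finset.Icc 1 (η ω), ξ k ω}
      = ∑ n ∈ Finset.range (D+1), p n * μ {ω | x < S0 n ω} := by
    intro x
    have hU : {ω | x < ∑ k ∈ Finset.Icc 1 (η ω), ξ k ω}
        = ⋃ n, ({ω | η ω = n} ∩ {ω | x < S0 n ω}) := by
      ext ω
      simp only [Set.mem_setOf_eq, Set.mem_iUnion, Set.mem_inter_iff]
      constructor
      · intro h; exact ⟨η ω, rfl, h⟩
      · rintro ⟨n, rfl, h⟩; exact h
    have hdisj : Pairwise (Function.onFun Disjoint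
        fun n => ({ω | η ω = n} ∩ {ω | x < S0 n ω})) := by
      intro m n hmn
      exact Set.disjoint_of_subset Set.inter_subset_left Set.inter_subset_left (hdisjη hmn)
    have hBmeas : ∀ n, MeasurableSet ({ω | η ω = n} ∩ {ω | x < S0 n ω}) := fun n =>
      (hηmeas (measurableSet_singleton n)).inter
        (measurableSet_lt measurable_const (hSmeas n))
    have hind : ∀ n, μ ({ω | η ω = n} ∩ {ω | x < S0 n ω}) = p n * μ {ω | x < S0 n ω} := by
      intro n
      have ht : MeasurableSet {f : ℕ → ℝ | x < ∑ k ∈ Finset.Icc 1 n, f k} :=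
        measurableSet_lt measurable_const
          (Finset.measurable_sum _ fun k _ => measurable_pi_apply k)
      have h := hindepη.measure_inter_preimage_eq_mul {n}
        {f : ℕ → ℝ | x < ∑ k ∈ Finset.Icc 1 n, f k} (measurableSet_singleton n) ht
      have h1 : η ⁻¹' {n} = {ω | η ω = n} := rfl
      have h2 : (fun ω => fun k => ξ k ω) ⁻¹' {f : ℕ → ℝ | x < ∑ k ∈ Finset.Icc 1 n, f k}
          = {ω | x < S0 n ω} := rfl
      rw [h1, h2] at h
      exact h
    rw [hU, measure_iUnion hdisj hBmeas]
    rw [tsum_eq_sum (s := Finset.range (D+1)) ?_]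
    · exact Finset.sum_congr rfl fun n _ => hind n
    · intro n hn
      have hDn : D < n := by
        simp only [Finset.mem_range, not_lt] at hn; omega
      rw [hind n, hnull n hDn, zero_mul]
  -- real-valued decomposition
  have hdecompR : ∀ x, tailDist μ (fun ω => ∑ k ∈ Finset.Icc 1 (η ω), ξ k ω) x
      = ∑ n ∈ Finset.range (D+1), (p n).toReal * tailDist μ (S0 n) x := by
    intro x
    show (μ {ω | x < ∑ k ∈ Finset.Icc 1 (η ω), ξ k ω}).toReal = _
    rw [hdecomp x, ENNReal.toReal_sum (fun n _ =>
      ENNReal.mul_ne_top (hpne n) (measure_ne_top μ _))]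
    exact Finset.sum_congr rfl fun n _ => ENNReal.toReal_mul
  set T : ℝ → ℝ := tailDist μ (fun ω => ∑ k ∈ Finset.Icc 1 (η ω), ξ k ω) with hTdef
  set Tn : ℕ → ℝ → ℝ := fun n => tailDist μ (S0 n) with hTndef
  -- nonnegativity and antitonicity
  have hTn_nonneg : ∀ n x, 0 ≤ Tn n x := fun n x => ENNReal.toReal_nonneg
  have hTn_anti : ∀ n ⦃a b : ℝ⦄, a ≤ b → Tn n b ≤ Tn n a := by
    intro n a b hab
    exact ENNReal.toReal_mono (measure_ne_top μ _)
      (measure_mono fun ω hω => lt_of_le_of_lt hab hω)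
  -- support finset
  set S : Finset ℕ := (Finset.Icc 1 D).filter (fun n => 0 < μ {ω | η ω = n}) with hSdef
  have hSsub : S ⊆ Finset.range (D+1) := by
    intro n hn
    rw [hSdef, Finset.mem_filter, Finset.mem_Icc] at hn
    rw [Finset.mem_range]; omega
  have hSmem : ∀ n ∈ S, 1 ≤ n ∧ 0 < μ {ω | η ω = n} := by
    intro n hn
    rw [hSdef, Finset.mem_filter, Finset.mem_Icc] at hn
    exact ⟨hn.1.1, hn.2⟩
  -- reduction to support, for x > 0
  have hTS : ∀ x : ℝ, 0 < x → T x = ∑ n ∈ S, (p n).toReal * Tn n x := by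
    intro x hx
    rw [hdecompR x]
    refine (Finset.sum_subset hSsub ?_).symm
    intro n hn hns
    rcases Nat.eq_zero_or_pos n with h0 | h1
    · subst h0
      have : {ω | x < S0 0 ω} = (∅ : Set Ω) := by
        ext ω
        simp only [hS0def, Set.mem_setOf_eq, Set.mem_empty_iff_false, iff_false, not_lt]
        rw [show Finset.Icc 1 0 = (∅ : Finset ℕ) from Finset.Icc_eq_empty (by omega)]
        simp only [Finset.sum_empty]
        exact le_of_lt hx
      have h6 : tailDist μ (S0 0) x = 0 := by
        show (μ {ω | x < S0 0 ω}).toReal = 0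
        rw [this, measure_empty]; simp
      rw [h6, mul_zero]
    · have hn' : n ∈ Finset.Icc 1 D := by
        rw [Finset.mem_range] at hn
        rw [Finset.mem_Icc]; omega
      have : ¬ 0 < μ {ω | η ω = n} := by
        intro hcon
        exact hns (by rw [hSdef, Finset.mem_filter]; exact ⟨hn', hcon⟩)
      have : p n = 0 := by
        rw [hpdef]; exact le_antisymm (not_lt.mp this) zero_le
      rw [this]; simp
  -- S is nonempty
  have hSne : S.Nonempty := by
    by_contra hemp
    rw [Finset.not_nonempty_iff_eq_empty] at hemp
    have hall : ∀ n, 1 ≤ n → n ≤ D → p n = 0 := by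
      intro n h1 h2
      by_contra hne
      have hpos' : 0 < μ {ω | η ω = n} := lt_of_le_of_ne zero_le (Ne.symm hne)
      have : n ∈ S := by
        rw [hSdef, Finset.mem_filter, Finset.mem_Icc]
        exact ⟨⟨h1, h2⟩, hpos'⟩
      rw [hemp] at this
      exact absurd this (Finset.notMem_empty n)
    have huniv : (Set.univ : Set Ω) = ⋃ n, {ω | η ω = n} := by
      ext ω; simp
    have hmeasη : ∀ n, MeasurableSet {ω | η ω = n} := fun n =>
      hηmeas (measurableSet_singleton n)
    have h1 : (1 : ENNReal) = ∑' n, p n := by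
      rw [hpdef, ← measure_univ (μ := μ), huniv, measure_iUnion hdisjη hmeasη]
    have h2 : ∑' n, p n = ∑ n ∈ Finset.range (D+1), p n :=
      tsum_eq_sum (fun n hn => hnull n (by
        simp only [Finset.mem_range, not_lt] at hn; omega))
    have h3 : ∑ n ∈ Finset.range (D+1), p n = p 0 := by
      refine Finset.sum_eq_single_of_mem 0 (by simp) ?_
      intro n hn hne
      exact hall n (by omega) (by rw [Finset.mem_range] at hn; omega)
    have h4 : (1 : ENNReal) = p 0 := by rw [h1, h2, h3]
    have h5 : μ {ω | η ω = 0} = p 0 := rfl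
    rw [h5, ← h4] at hηnondeg
    exact lt_irrefl 1 hηnondeg
  -- positivity of T
  have hTpos : ∀ x : ℝ, 0 < x → 0 < T x := by
    intro x hx
    obtain ⟨n0, hn0⟩ := hSne
    obtain ⟨h1, hpos'⟩ := hSmem n0 hn0
    rw [hTS x hx]
    have hterm : 0 < (p n0).toReal * Tn n0 x := by
      apply mul_pos
      · exact ENNReal.toReal_pos (ne_of_gt hpos') (hpne n0)
      · exact hpos n0 h1 hpos' x
    refine lt_of_lt_of_le hterm ?_
    exact Finset.single_le_sum (fun n hn => mul_nonneg ENNReal.toReal_nonneg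
      (hTn_nonneg n x)) hn0
  -- main part
  rw [ConsistentlyVarying, Metric.tendsto_nhds]
  intro ε hε
  set δ : ℝ := min (ε/2) (1/2) with hδdef
  have hδpos : 0 < δ := lt_min (by linarith) (by norm_num)
  have hδε : δ < ε := lt_of_le_of_lt (min_le_left _ _) (by linarith)
  -- eventual facts about y
  have hy1 : ∀ᶠ y in 𝓝[<] (1:ℝ), y < 1 := eventually_mem_nhdsWithin
  have hy0 : ∀ᶠ y in 𝓝[<] (1:ℝ), 0 < y :=
    eventually_nhdsWithin_of_eventually_nhds (eventually_gt_nhds (by norm_num))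
  have hG : ∀ᶠ y in 𝓝[<] (1:ℝ), ∀ n ∈ S,
      dist (Filter.limsup (fun x => Tn n (x * y) / Tn n x) atTop) 1 < δ := by
    rw [Filter.eventually_all_finset]
    intro n hn
    obtain ⟨h1, hpos'⟩ := hSmem n hn
    exact Metric.tendsto_nhds.mp (hCV n h1 hpos') δ hδpos
  filter_upwards [hy0, hy1, hG] with y hy0 hy1 hGy
  -- fix y; derive bounds on the limsup for T
  have hxy : ∀ n ∈ S, ∀ᶠ x in atTop, Tn n (x * y) < (1 + δ) * Tn n x := by
    intro n hn
    obtain ⟨h1, hpos'⟩ := hSmem n hn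
    have hd := hGy n hn
    rw [Real.dist_eq, abs_lt] at hd
    have hub : Filter.limsup (fun x => Tn n (x * y) / Tn n x) atTop < 1 + δ := by
      linarith [hd.2]
    have hlb : (0:ℝ) < Filter.limsup (fun x => Tn n (x * y) / Tn n x) atTop := by
      have : δ ≤ 1/2 := min_le_right _ _
      linarith [hd.1]
    -- boundedness: otherwise the limsup would be the junk value 0
    have hbd : IsBoundedUnder (· ≤ ·) atTop (fun x => Tn n (x * y) / Tn n x) := by
      by_contra hnb
      have hempty : {a : ℝ | ∀ᶠ x in atTop, Tn n (x * y) / Tn n x ≤ a} = ∅ := by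
        rw [Set.eq_empty_iff_forall_notMem]
        intro a ha
        exact hnb ⟨a, by simpa [eventually_map] using ha⟩
      have : Filter.limsup (fun x => Tn n (x * y) / Tn n x) atTop = 0 := by
        rw [Filter.limsup_eq, hempty, Real.sInf_empty]
      rw [this] at hlb
      exact lt_irrefl 0 hlb
    have hev := eventually_lt_of_limsup_lt hub hbd
    filter_upwards [hev, eventually_gt_atTop (0:ℝ)] with x hx hx0
    have hTnx : 0 < Tn n x := hpos n h1 hpos' x
    calc Tn n (x * y) = (Tn n (x * y) / Tn n x) * Tn n x := by field_simp
      _ < (1 + δ) * Tn n x := by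
          exact mul_lt_mul_of_pos_right hx hTnx
  have hxall : ∀ᶠ x in atTop, ∀ n ∈ S, Tn n (x * y) < (1 + δ) * Tn n x :=
    Filter.eventually_all_finset S |>.mpr hxy
  -- the ratio for T is eventually in [1, 1+δ]
  have hratio : ∀ᶠ x in atTop, 1 ≤ T (x * y) / T x ∧ T (x * y) / T x ≤ 1 + δ := by
    filter_upwards [hxall, eventually_gt_atTop (0:ℝ)] with x hx hx0
    have hxy0 : 0 < x * y := mul_pos hx0 hy0
    have hTx : 0 < T x := hTpos x hx0
    constructor
    · -- lower bound: xy ≤ x implies T(xy) ≥ T(x)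
      rw [le_div_iff₀ hTx, one_mul]
      have hle : x * y ≤ x := by nlinarith
      exact ENNReal.toReal_mono (measure_ne_top μ _)
        (measure_mono fun ω hω => lt_of_le_of_lt hle hω)
    · -- upper bound via decomposition
      rw [div_le_iff₀ hTx]
      rw [hTS (x * y) hxy0, hTS x hx0, Finset.mul_sum]
      refine Finset.sum_le_sum ?_
      intro n hn
      have := hx n hn
      have hp0 : (0:ℝ) ≤ (p n).toReal := ENNReal.toReal_nonneg
      calc (p n).toReal * Tn n (x * y) ≤ (p n).toReal * ((1 + δ) * Tn n x) :=
            mul_le_mul_of_nonneg_left (le_of_lt this) hp0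
        _ = (1 + δ) * ((p n).toReal * Tn n x) := by ring
  -- conclude about the limsup
  set L : ℝ := Filter.limsup (fun x => T (x * y) / T x) atTop with hLdef
  have hevub : ∀ᶠ x in atTop, T (x * y) / T x ≤ 1 + δ := hratio.mono fun x h => h.2
  have hevlb : ∀ᶠ x in atTop, 1 ≤ T (x * y) / T x := hratio.mono fun x h => h.1
  have hLub : L ≤ 1 + δ := by
    refine Filter.limsup_le_of_le ?_ hevub
    exact Filter.IsCoboundedUnder.of_frequently_ge hevlb.frequently
  have hLlb : 1 ≤ L := by
    refine Filter.le_limsup_of_frequently_le hevlb.frequently ?_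
    exact ⟨1 + δ, by simpa [eventually_map] using hevub⟩
  rw [Real.dist_eq, abs_of_nonneg (by linarith)]
  linarith
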